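/- Let Ω be a set with card(Ω) = 𝔠, and let S be a subset of (0,∞) with card(S) = 𝔠. Then there exists a strongly rigid S-semi-metric r on Ω. -/

import Mathlib

/-- If `card Ω = 𝔠` and `S ⊆ (0,∞)` has `card S = 𝔠`, then there exists
a strongly rigid `S`-semi-metric on `Ω`. -/
theorem stmt5 {Ω : Type*} (hΩ : Cardinal.mk Ω = Cardinal.continuum)
    (S : Set ℝ) (hSsub : S ⊆ Set.Ioi 0) (hScard : Cardinal.mk ↥S = Cardinal.continuum) :
    ∃ r : Ω → Ω → ℝ,
      (∀ x y, r x y = r y x) ∧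
      (∀ x y, r x y = 0 ↔ x = y) ∧
      (∀ x y, x ≠ y → r x y ∈ S) ∧
      (∀ x y u v : Ω, r x y = r u v → r x y ≠ 0 →
        ({x, y} : Set Ω) = ({u, v} : Set Ω)) := by
  have hprod : Cardinal.mk (Ω × Ω) = Cardinal.continuum := by
    simp [Cardinal.mk_prod, hΩ, Cardinal.continuum_mul_self]
  have hle : Nonempty (Sym2 Ω ↪ ↥S) := by
    rw [← Cardinal.lift_mk_le']
    rw [hScard, Cardinal.lift_continuum]
    calc Cardinal.lift.{0} (Cardinal.mk (Sym2 Ω))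
        ≤ Cardinal.lift.{0} (Cardinal.mk (Ω × Ω)) :=
          Cardinal.lift_le.mpr (Cardinal.mk_le_of_surjective
            (f := fun p : Ω × Ω => Sym2.mk p.1 p.2) (Sym2.mk_surjective))
      _ = Cardinal.continuum := by rw [hprod, Cardinal.lift_continuum]
  obtain ⟨g⟩ := hle
  classical
  refine ⟨fun x y => if x = y then 0 else (g s(x, y) : ℝ), ?_, ?_, ?_, ?_⟩
  · intro x y
    by_cases h : x = y
    · simp [h]
    · simp [h, Ne.symm h, Sym2.eq_swap]
  · intro x y
    by_cases h : x = y
    · simp [h]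
    · simp only [h, if_neg h, iff_false]
      exact ne_of_gt (hSsub (g s(x, y)).2)
  · intro x y h
    simp only [if_neg h]
    exact (g s(x, y)).2
  · intro x y u v heq hne
    have hxy : x ≠ y := by rintro rfl; simp at hne
    have huv : u ≠ v := by
      rintro rfl
      rw [heq] at hne; simp at hne
    simp only [if_neg hxy, if_neg huv] at heq
    have := g.injective (Subtype.ext heq)
    replace this := (Sym2.mk_eq_mk_iff (p := (x, y)) (q := (u, v))).mp this
    rcases this with h | h
    · obtain ⟨rfl, rfl⟩ := Prod.mk.injEq .. ▸ Prod.ext_iff.mp h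
      rfl
    · obtain ⟨rfl, rfl⟩ := Prod.ext_iff.mp h
      exact Set.pair_comm x y
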